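/- Let $B$ be a symmetric nonnegative $N \times N$ matrix, $\gamma \in [0,1)$, $\mu > 0$, and $P_i^A \in [0,1]$ for each $i$. Define the matrix $H$ by $h_{ij} = [1 - (1-\gamma) P_i^A] b_{ji}$. If a nonzero nonnegative vector $\varepsilon$ satisfies $\mu \varepsilon_i = \beta^U [1 - (1-\gamma) P_i^A] \sum_j b_{ji} \varepsilon_j$ for all $i$ with $\beta^U > 0$, then $\mu / \beta^U$ is an eigenvalue of $H$, and hence $\beta^U \ge \mu / \Lambda_{\max}$ where $\Lambda_{\max}$ is the largest eigenvalue (in absolute value) of $H$. -/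

import Mathlib

open Matrix

lemma my_eval_charpoly {n : ℕ} (M : Matrix (Fin n) (Fin n) ℝ) (x : ℝ) :
    M.charpoly.eval x = (x • (1 : Matrix (Fin n) (Fin n) ℝ) - M).det := by
  rw [Matrix.charpoly, ← Polynomial.coe_evalRingHom, RingHom.map_det]
  congr 1
  ext i j
  by_cases h : i = j <;>
    simp [Matrix.charmatrix, h, Matrix.one_apply, Matrix.scalar_apply]

/-- Theorem 2 of the paper: a nonzero nonnegative steady-state infection vector `ε`
satisfying `μ εᵢ = β^U [1-(1-γ)Pᵢ^A] ∑ⱼ b_{ji} εⱼ` forces `μ/β^U` to be an eigenvalue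
of the matrix `H` with `h_{ij} = [1-(1-γ)Pᵢ^A] b_{ji}`, hence `β^U ≥ μ/Λ_max` where
`Λ_max` bounds the absolute values of all (complex) eigenvalues of `H`. -/
theorem epidemic_threshold_eigenvalue
    (N : ℕ) (B : Matrix (Fin N) (Fin N) ℝ)
    (hBsymm : B.IsSymm) (hBnn : ∀ i j, 0 ≤ B i j)
    (γ μ βU Λmax : ℝ) (hγ0 : 0 ≤ γ) (hγ1 : γ < 1) (hμ : 0 < μ) (hβU : 0 < βU)
    (PA : Fin N → ℝ) (hPA : ∀ i, 0 ≤ PA i ∧ PA i ≤ 1)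
    (H : Matrix (Fin N) (Fin N) ℝ)
    (hH : ∀ i j, H i j = (1 - (1 - γ) * PA i) * B j i)
    (hΛ : ∀ z : ℂ, (H.map (fun x : ℝ => (x : ℂ))).charpoly.IsRoot z → ‖z‖ ≤ Λmax)
    (ε : Fin N → ℝ) (hεnn : ∀ i, 0 ≤ ε i) (hεne : ε ≠ 0)
    (heq : ∀ i, μ * ε i = βU * (1 - (1 - γ) * PA i) * ∑ j, B j i * ε j) :
    H.charpoly.IsRoot (μ / βU) ∧ μ / Λmax ≤ βU := by
  have hmul : H *ᵥ ε = (μ / βU) • ε := by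
    funext i
    simp only [Matrix.mulVec, dotProduct, Pi.smul_apply, smul_eq_mul]
    have hs : ∑ j, H i j * ε j
        = (1 - (1 - γ) * PA i) * ∑ j, B j i * ε j := by
      rw [Finset.mul_sum]
      exact Finset.sum_congr rfl fun j _ => by rw [hH i j, mul_assoc]
    rw [hs]
    have h := heq i
    field_simp
    linarith
  have hker : ((μ / βU) • (1 : Matrix (Fin N) (Fin N) ℝ) - H) *ᵥ ε = 0 := by
    rw [Matrix.sub_mulVec, Matrix.smul_mulVec, Matrix.one_mulVec, hmul, sub_self]
  have hdet : ((μ / βU) • (1 : Matrix (Fin N) (Fin N) ℝ) - H).det = 0 := by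
    rw [← Matrix.exists_mulVec_eq_zero_iff]
    exact ⟨ε, hεne, hker⟩
  have hroot : H.charpoly.IsRoot (μ / βU) := by
    rw [Polynomial.IsRoot, my_eval_charpoly, hdet]
  refine ⟨hroot, ?_⟩
  have hrootC : (H.map (fun x : ℝ => (x : ℂ))).charpoly.IsRoot ((μ / βU : ℝ) : ℂ) := by
    have := Matrix.charpoly_map H Complex.ofRealHom
    rw [show (fun x : ℝ => (x : ℂ)) = ⇑Complex.ofRealHom from rfl, this]
    exact hroot.map (f := Complex.ofRealHom)
  have habs := hΛ _ hrootC
  rw [Complex.norm_real, Real.norm_eq_abs, abs_of_pos (by positivity)] at habs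
  have hΛpos : 0 < Λmax := lt_of_lt_of_le (by positivity) habs
  rw [div_le_iff₀ hΛpos]
  nlinarith [div_nonneg hμ.le hβU.le, (div_le_iff₀ hβU).mp habs]
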